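/- For all integers n ≥ 1, 2·F_{4n+2} − 3·F_{4n−2} = L_{2n} + L_{2n−2} + 4·∑_{k=0}^{n−1} F_{4k+2}·L_{2n−2k−2}. -/
import Mathlib

def lucas : ℕ → ℕ
  | 0 => 2
  | 1 => 1
  | n + 2 => lucas (n + 1) + lucas n

lemma fib8 (j : ℕ) : (Nat.fib (j+8) : ℤ) = 7 * Nat.fib (j+4) - Nat.fib j := by
  have h : Nat.fib (j+8) + Nat.fib j = 7 * Nat.fib (j+4) := by
    simp [Nat.fib_add_two]; ring
  omega

lemma lucas4 (j : ℕ) : (lucas (j+4) : ℤ) = 3 * lucas (j+2) - lucas j := by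
  have h : lucas (j+4) + lucas j = 3 * lucas (j+2) := by
    simp [lucas]; ring
  omega

lemma aux15 (m : ℕ) :
    2 * (Nat.fib (4*m+6) : ℤ) - 3 * (Nat.fib (4*m+2) : ℤ) =
      (lucas (2*m+2) : ℤ) + (lucas (2*m) : ℤ) +
        4 * ∑ k ∈ Finset.range (m+1), (Nat.fib (4*k+2) : ℤ) * (lucas (2*m - 2*k) : ℤ) := by
  induction m using Nat.twoStepInduction with
  | zero =>
      norm_num [Finset.sum_range_succ, show Nat.fib 6 = 8 from rfl,
        show Nat.fib 2 = 1 from rfl, show lucas 2 = 3 from rfl, show lucas 0 = 2 from rfl]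
  | one =>
      norm_num [Finset.sum_range_succ, show Nat.fib 10 = 55 from rfl,
        show Nat.fib 6 = 8 from rfl, show Nat.fib 2 = 1 from rfl,
        show lucas 4 = 7 from rfl, show lucas 2 = 3 from rfl, show lucas 0 = 2 from rfl]
  | more n ih1 ih2 =>
      have hcongr : ∑ k ∈ Finset.range (n+1), (Nat.fib (4*k+2) : ℤ) * (lucas (2*n+4 - 2*k) : ℤ)
          = ∑ k ∈ Finset.range (n+1),
              (3 * ((Nat.fib (4*k+2) : ℤ) * (lucas (2*n+2 - 2*k) : ℤ))
                - (Nat.fib (4*k+2) : ℤ) * (lucas (2*n - 2*k) : ℤ)) := by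
        apply Finset.sum_congr rfl
        intro k hk
        have hk' : k ≤ n := by simpa [Nat.lt_succ_iff] using hk
        obtain ⟨d, rfl⟩ : ∃ d, n = k + d := ⟨n - k, by omega⟩
        rw [show 2*(k+d)+4 - 2*k = d*2+4 by omega, show 2*(k+d)+2 - 2*k = (d*2)+2 by omega,
          show 2*(k+d) - 2*k = d*2 by omega, lucas4]
        ring
      have hsum : (∑ k ∈ Finset.range (n+3), (Nat.fib (4*k+2) : ℤ) * (lucas (2*n+4 - 2*k) : ℤ))
          = 3 * (∑ k ∈ Finset.range (n+2), (Nat.fib (4*k+2) : ℤ) * (lucas (2*n+2 - 2*k) : ℤ))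
            - (∑ k ∈ Finset.range (n+1), (Nat.fib (4*k+2) : ℤ) * (lucas (2*n - 2*k) : ℤ))
            - 3 * (Nat.fib (4*n+6) : ℤ) + 2 * (Nat.fib (4*n+10) : ℤ) := by
        rw [show n+3 = (n+2)+1 from rfl, Finset.sum_range_succ, Finset.sum_range_succ,
          Finset.sum_range_succ (f := fun k => (Nat.fib (4*k+2) : ℤ) * (lucas (2*n+2 - 2*k) : ℤ)),
          hcongr, Finset.sum_sub_distrib, ← Finset.mul_sum]
        rw [show 2*n+4 - 2*(n+1) = 2 by omega, show 2*n+4 - 2*(n+2) = 0 by omega,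
          show 2*n+2 - 2*(n+1) = 0 by omega,
          show 4*(n+1)+2 = 4*n+6 by ring, show 4*(n+2)+2 = 4*n+10 by ring]
        norm_num [show lucas 2 = 3 from rfl, show lucas 0 = 2 from rfl]
        ring
      have e2 : 2*(n+2)+2 = 2*n+6 := by ring
      have e3 : 2*(n+1)+2 = 2*n+4 := by ring
      have hf1 : (Nat.fib (4*n+14) : ℤ) = 7 * Nat.fib (4*n+10) - Nat.fib (4*n+6) := by
        have := fib8 (4*n+6); rw [show 4*n+6+8 = 4*n+14 by ring, show 4*n+6+4 = 4*n+10 by ring] at this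
        exact this
      have hf2 : (Nat.fib (4*n+10) : ℤ) = 7 * Nat.fib (4*n+6) - Nat.fib (4*n+2) := by
        have := fib8 (4*n+2); rw [show 4*n+2+8 = 4*n+10 by ring, show 4*n+2+4 = 4*n+6 by ring] at this
        exact this
      have hl1 : (lucas (2*n+6) : ℤ) = 3 * lucas (2*n+4) - lucas (2*n+2) := by
        have := lucas4 (2*n+2); rw [show 2*n+2+4 = 2*n+6 by ring, show 2*n+2+2 = 2*n+4 by ring] at this
        exact this
      have hl2 : (lucas (2*n+4) : ℤ) = 3 * lucas (2*n+2) - lucas (2*n) := by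
        have := lucas4 (2*n); rw [show 2*n+4 = 2*n+4 by ring, show 2*n+2 = 2*n+2 by ring] at this
        exact this
      rw [show 4*(n+2)+6 = 4*n+14 by ring, show 4*(n+2)+2 = 4*n+10 by ring,
        show 2*(n+2)+2 = 2*n+6 by ring, show 2*(n+2) = 2*n+4 by ring,
        show n+2+1 = n+3 from rfl, hsum]
      rw [show 4*(n+1)+6 = 4*n+10 by ring, show 4*(n+1)+2 = 4*n+6 by ring,
        show 2*(n+1)+2 = 2*n+4 by ring, show 2*(n+1) = 2*n+2 by ring,
        show n+1+1 = n+2 from rfl] at ih2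
      linarith [ih1, ih2, hf1, hf2, hl1, hl2]

theorem stmt15 (n : ℕ) (hn : 1 ≤ n) :
    2 * (Nat.fib (4 * n + 2) : ℤ) - 3 * (Nat.fib (4 * n - 2) : ℤ) =
      (lucas (2 * n) : ℤ) + (lucas (2 * n - 2) : ℤ) +
        4 * ∑ k ∈ Finset.range n, (Nat.fib (4 * k + 2) : ℤ) * (lucas (2 * n - 2 * k - 2) : ℤ) := by
  obtain ⟨m, rfl⟩ : ∃ m, n = m + 1 := ⟨n - 1, by omega⟩
  have hcongr : ∑ k ∈ Finset.range (m+1), (Nat.fib (4*k+2) : ℤ) * (lucas (2*(m+1) - 2*k - 2) : ℤ)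
      = ∑ k ∈ Finset.range (m+1), (Nat.fib (4*k+2) : ℤ) * (lucas (2*m - 2*k) : ℤ) := by
    apply Finset.sum_congr rfl
    intro k hk
    have hk' : k ≤ m := by simpa [Nat.lt_succ_iff] using hk
    rw [show 2*(m+1) - 2*k - 2 = 2*m - 2*k by omega]
  rw [hcongr, show 4*(m+1)+2 = 4*m+6 by ring, show 4*(m+1)-2 = 4*m+2 by omega,
    show 2*(m+1)-2 = 2*m by omega, show 2*(m+1) = 2*m+2 by ring]
  exact aux15 m
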